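/- Let H be a complex Hilbert space and r ≥ 0. Let K, R : ℝ → L(H) be such that K(t) is skew-adjoint (K(t)* = −K(t)) and ‖R(t)‖ ≤ r for every t ∈ ℝ. Let u : ℝ → H be differentiable with u'(t) = K(t)(u(t)) + R(t)(u(t)) for all t. Then ‖u(t)‖ ≤ e^{r t} ‖u(0)‖ for all t ≥ 0. -/

import Mathlib

open Complex in
/-- Let `H` be a complex Hilbert space and `r ≥ 0`. Let `K, R : ℝ → L(H)`
with `K t` skew-adjoint and `‖R t‖ ≤ r` for every `t`. If `u : ℝ → H` is differentiable
with `u' t = K t (u t) + R t (u t)`, then `‖u t‖ ≤ e^{r t} ‖u 0‖` for all `t ≥ 0`. -/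
theorem stmt_7 {H : Type*} [NormedAddCommGroup H] [InnerProductSpace ℂ H] [CompleteSpace H]
    (r : ℝ) (hr : 0 ≤ r) (K R : ℝ → H →L[ℂ] H)
    (hK : ∀ t : ℝ, ContinuousLinearMap.adjoint (K t) = -(K t))
    (hR : ∀ t : ℝ, ‖R t‖ ≤ r)
    (u : ℝ → H) (hu : ∀ t : ℝ, HasDerivAt u (K t (u t) + R t (u t)) t) :
    ∀ t ≥ (0 : ℝ), ‖u t‖ ≤ Real.exp (r * t) * ‖u 0‖ := by
  intro t ht
  set g : ℝ → ℝ := fun s => ‖u s‖ ^ 2 with hgdef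
  set g' : ℝ → ℝ := fun s => 2 * Complex.re (inner ℂ (u s) (R s (u s)) : ℂ) with hg'def
  -- derivative of g
  have hKre : ∀ s : ℝ, Complex.re (inner ℂ (u s) (K s (u s)) : ℂ) = 0 := by
    intro s
    have h1 : (inner ℂ (u s) (K s (u s)) : ℂ)
        = inner ℂ (ContinuousLinearMap.adjoint (K s) (u s)) (u s) := by
      rw [ContinuousLinearMap.adjoint_inner_left]
    rw [hK s] at h1
    have h2 : (inner ℂ (u s) (K s (u s)) : ℂ) = - inner ℂ (K s (u s)) (u s) := by
      simpa using h1
    have h3 : (inner ℂ (K s (u s)) (u s) : ℂ) = starRingEnd ℂ (inner ℂ (u s) (K s (u s))) := by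
      exact (inner_conj_symm _ _).symm
    rw [h3] at h2
    have h4 := congrArg Complex.re h2
    simp only [Complex.neg_re, Complex.conj_re] at h4
    linarith
  have hd : ∀ s : ℝ, HasDerivAt g (g' s) s := by
    intro s
    have h := ((hu s).inner ℂ (hu s))
    have hre := (Complex.reCLM.hasFDerivAt.comp_hasDerivAt s h)
    have heq : (⇑Complex.reCLM ∘ fun τ => ((inner ℂ (u τ) (u τ)) : ℂ)) = g := by
      funext τ
      simp only [Function.comp_apply, Complex.reCLM_apply, hgdef]
      simpa using inner_self_eq_norm_sq (𝕜 := ℂ) (u τ)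
    rw [heq] at hre
    refine hre.congr_deriv ?_
    symm
    have : (inner ℂ (u s) (K s (u s) + R s (u s)) : ℂ)
        = inner ℂ (u s) (K s (u s)) + inner ℂ (u s) (R s (u s)) := inner_add_right _ _ _
    have h2 : (inner ℂ (K s (u s) + R s (u s)) (u s) : ℂ)
        = starRingEnd ℂ (inner ℂ (u s) (K s (u s) + R s (u s))) := (inner_conj_symm _ _).symm
    simp only [hg'def, Complex.reCLM_apply, this, h2, map_add, Complex.add_re, Complex.conj_re]
    have := hKre s
    ring_nf
    linarith
  -- Gronwall bound on g
  have hgnn : ∀ s, 0 ≤ g s := fun s => sq_nonneg _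
  have hbound : ∀ x ∈ Set.Ico (0:ℝ) t, ‖g' x‖ ≤ (2 * r) * ‖g x‖ + 0 := by
    intro x _
    have h1 : ‖g' x‖ ≤ 2 * ‖(inner ℂ (u x) (R x (u x)) : ℂ)‖ := by
      rw [hg'def]
      simp only [norm_mul, Real.norm_ofNat]
      gcongr
      exact Complex.abs_re_le_norm _
    have h2 : ‖(inner ℂ (u x) (R x (u x)) : ℂ)‖ ≤ ‖u x‖ * ‖R x (u x)‖ := norm_inner_le_norm _ _
    have h3 : ‖R x (u x)‖ ≤ r * ‖u x‖ := by
      calc ‖R x (u x)‖ ≤ ‖R x‖ * ‖u x‖ := (R x).le_opNorm _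
        _ ≤ r * ‖u x‖ := by gcongr; exact hR x
    have h4 : ‖g x‖ = ‖u x‖ ^ 2 := by
      rw [hgdef]; exact Real.norm_of_nonneg (sq_nonneg _)
    nlinarith [norm_nonneg (u x)]
  have hgc : ContinuousOn g (Set.Icc 0 t) :=
    (fun s _ => ((hd s).continuousAt).continuousWithinAt)
  have key := norm_le_gronwallBound_of_norm_deriv_right_le hgc
    (fun x _ => (hd x).hasDerivWithinAt) le_rfl
    hbound t (Set.right_mem_Icc.2 ht)
  rw [gronwallBound_ε0] at key
  have hkey : ‖u t‖ ^ 2 ≤ (Real.exp (r * t) * ‖u 0‖) ^ 2 := by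
    have h0 : ‖g 0‖ = ‖u 0‖ ^ 2 := Real.norm_of_nonneg (hgnn 0)
    have ht' : ‖g t‖ = g t := Real.norm_of_nonneg (hgnn t)
    rw [ht', h0] at key
    calc ‖u t‖ ^ 2 = g t := rfl
      _ ≤ ‖u 0‖ ^ 2 * Real.exp (2 * r * (t - 0)) := key
      _ = (Real.exp (r * t) * ‖u 0‖) ^ 2 := by
          rw [mul_pow, sq (Real.exp _), ← Real.exp_add]
          ring_nf
  have := Real.sqrt_le_sqrt hkey
  rwa [Real.sqrt_sq (norm_nonneg _), Real.sqrt_sq (by positivity)] at this
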